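/- Let M be an L-structure, let Δ₀ be a finite set of partitioned L-formulas δ(x₀; x₁, y) with x₀, x₁ single variables, and let φ(x₀, x₁; y) be a finite boolean combination of formulas from Δ₀. Suppose that for every a₁ ∈ M the family of instances {δ(M; a₁, b) : δ ∈ Δ₀, b ∈ M^{|y|}} is directed, where δ(M; a₁, b) = {a₀ ∈ M : M ⊨ δ(a₀; a₁, b)}. For δ, δ' ∈ Δ₀ let ψ_{δ,δ'}(x₁; y, y') = ∀x₀ (δ'(x₀; x₁, y') → δ(x₀; x₁, y)), and let Ψ = {ψ_{δ,δ'} : δ, δ' ∈ Δ₀}. Then for every finite B ⊆ M^{|y|}, the number of realized φ-types over B in M (distinct functions b ↦ (M ⊨ φ(a₀, a₁; b)) as (a₀,a₁) ranges over M²) is at most (|Δ₀|·|B| + 1) times the number of realized Ψ-types over B × B in M (distinct functions ((b,b'), ψ) ↦ (M ⊨ ψ(a₁; b, b')) as a₁ ranges over M). -/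

import Mathlib

open FirstOrder Language

/-- Finite boolean combinations of a set of formulas (over a fixed variable type). -/
inductive FormulaBoolComb {L : Language} {α : Type*} (S : Set (L.Formula α)) :
    L.Formula α → Prop
  | base {φ} (h : φ ∈ S) : FormulaBoolComb S φ
  | bot : FormulaBoolComb S ⊥
  | not {φ} (h : FormulaBoolComb S φ) : FormulaBoolComb S φ.not
  | sup {φ ψ} (hφ : FormulaBoolComb S φ) (hψ : FormulaBoolComb S ψ) :
      FormulaBoolComb S (φ ⊔ ψ)

private lemma boolcomb_iff {L : Language} {M : Type*} [L.Structure M] {α : Type*}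
    {S : Set (L.Formula α)} {φ : L.Formula α} (hφ : FormulaBoolComb S φ)
    {v w : α → M} (h : ∀ ψ ∈ S, (ψ.Realize v ↔ ψ.Realize w)) :
    φ.Realize v ↔ φ.Realize w := by
  induction hφ with
  | base hs => exact h _ hs
  | bot => simp [Formula.Realize]
  | not _ ih => simp [Formula.realize_not, ih]
  | sup _ _ ih1 ih2 => simp [Formula.realize_sup, ih1, ih2]

private lemma exists_min_finset {α β : Type*} [PartialOrder β] (F : Finset α)
    (hne : F.Nonempty) (Sf : α → β)
    (hcomp : ∀ p ∈ F, ∀ q ∈ F, Sf p ≤ Sf q ∨ Sf q ≤ Sf p) :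
    ∃ p ∈ F, ∀ q ∈ F, Sf p ≤ Sf q := by
  classical
  obtain ⟨m, hm, hmin⟩ := (F.image Sf).exists_minimal (hne.image Sf)
  obtain ⟨p, hp, rfl⟩ := Finset.mem_image.mp hm
  refine ⟨p, hp, fun q hq => ?_⟩
  rcases hcomp p hp q hq with h | h
  · exact h
  · rcases lt_or_eq_of_le h with h' | h'
    · exact absurd h' (not_lt_of_ge (hmin (Finset.mem_image_of_mem Sf hq) h))
    · exact le_of_eq h'.symm

/-- Let `M` be an `L`-structure, `Δ₀` a finite set of partitioned formulas
`δ(x₀; x₁, y)` with `x₀, x₁` single variables (indexed by the finite type `J`), and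
`φ(x₀,x₁; y)` a finite boolean combination of formulas from `Δ₀`.  Suppose for every
`a₁ ∈ M` the family of instances `{δ(M; a₁, b) : δ ∈ Δ₀, b ∈ M^{|y|}}` is directed.  With
`ψ_{δ,δ'}(x₁; y, y') = ∀x₀ (δ'(x₀; x₁, y') → δ(x₀; x₁, y))` and
`Ψ = {ψ_{δ,δ'} : δ, δ' ∈ Δ₀}`, for every finite `B ⊆ M^{|y|}` the number of realized
`φ`-types over `B` in `M` is at most `(|Δ₀|·|B| + 1)` times the number of realized
`Ψ`-types over `B × B` in `M`. -/
theorem phi_type_count_le {L : Language} {M : Type*} [L.Structure M] [Nonempty M]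
    {J : Type*} [Fintype J] {k : ℕ}
    (δ : J → L.Formula (Fin 2 ⊕ Fin k)) (φ : L.Formula (Fin 2 ⊕ Fin k))
    (hφ : FormulaBoolComb (Set.range δ) φ)
    (hdir : ∀ a₁ : M,
      ∀ S ∈ {S : Set M | ∃ (j : J) (b : Fin k → M),
          S = {a₀ : M | (δ j).Realize (Sum.elim ![a₀, a₁] b)}},
      ∀ S' ∈ {S : Set M | ∃ (j : J) (b : Fin k → M),
          S = {a₀ : M | (δ j).Realize (Sum.elim ![a₀, a₁] b)}},
      S ⊆ S' ∨ S' ⊆ S ∨ S ∩ S' = ∅)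
    (B : Finset (Fin k → M)) :
    Set.ncard {f : {b // b ∈ B} → Prop | ∃ a₀ a₁ : M,
        f = fun b => φ.Realize (Sum.elim ![a₀, a₁] b.1)} ≤
      (Fintype.card J * B.card + 1) *
        Set.ncard {f : ({b // b ∈ B} × {b // b ∈ B}) × (J × J) → Prop | ∃ a₁ : M,
          f = fun q => ∀ a₀ : M,
            (δ q.2.2).Realize (Sum.elim ![a₀, a₁] q.1.2.1) →
              (δ q.2.1).Realize (Sum.elim ![a₀, a₁] q.1.1.1)} := by
  classical
  set T1 : Set ({b // b ∈ B} → Prop) := {f | ∃ a₀ a₁ : M,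
      f = fun b => φ.Realize (Sum.elim ![a₀, a₁] b.1)} with hT1
  set ψf : M → (({b // b ∈ B} × {b // b ∈ B}) × (J × J)) → Prop :=
    fun a₁ q => ∀ a₀ : M,
      (δ q.2.2).Realize (Sum.elim ![a₀, a₁] q.1.2.1) →
        (δ q.2.1).Realize (Sum.elim ![a₀, a₁] q.1.1.1) with hψf
  set T2 : Set ((({b // b ∈ B} × {b // b ∈ B}) × (J × J)) → Prop) :=
    {f | ∃ a₁ : M, f = ψf a₁} with hT2
  have hex : ∀ t : T1, ∃ a₀ a₁ : M,
      (t : {b // b ∈ B} → Prop) = fun b => φ.Realize (Sum.elim ![a₀, a₁] b.1) :=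
    fun t => t.2
  choose a0 a1 hspec using hex
  -- the family of sets
  set Sset : M → J × {b // b ∈ B} → Set M :=
    fun a₁ p => {x : M | (δ p.1).Realize (Sum.elim ![x, a₁] p.2.1)} with hSset
  set F : T1 → Finset (J × {b // b ∈ B}) :=
    fun t => Finset.univ.filter fun p => (δ p.1).Realize (Sum.elim ![a0 t, a1 t] p.2.1)
    with hF
  have hmemF : ∀ (t : T1) (p : J × {b // b ∈ B}),
      p ∈ F t ↔ (δ p.1).Realize (Sum.elim ![a0 t, a1 t] p.2.1) := by
    intro t p; simp [hF]
  have hcomp : ∀ t : T1, ∀ p ∈ F t, ∀ q ∈ F t,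
      Sset (a1 t) p ≤ Sset (a1 t) q ∨ Sset (a1 t) q ≤ Sset (a1 t) p := by
    intro t p hp q hq
    rcases hdir (a1 t) (Sset (a1 t) p) ⟨p.1, p.2.1, rfl⟩
        (Sset (a1 t) q) ⟨q.1, q.2.1, rfl⟩ with h | h | h
    · exact Or.inl h
    · exact Or.inr h
    · exfalso
      have hx : a0 t ∈ Sset (a1 t) p ∩ Sset (a1 t) q :=
        ⟨(hmemF t p).1 hp, (hmemF t q).1 hq⟩
      rw [h] at hx
      exact hx
  have hminex : ∀ t : T1, (F t).Nonempty →
      ∃ p ∈ F t, ∀ q ∈ F t, Sset (a1 t) p ≤ Sset (a1 t) q :=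
    fun t hne => exists_min_finset (F t) hne (Sset (a1 t)) (hcomp t)
  set pmin : T1 → Option (J × {b // b ∈ B}) :=
    fun t => if h : (F t).Nonempty then some (hminex t h).choose else none with hpmin
  set g : T1 → Option (J × {b // b ∈ B}) × T2 :=
    fun t => (pmin t, ⟨ψf (a1 t), ⟨a1 t, rfl⟩⟩) with hg
  have hginj : Function.Injective g := by
    intro t t' heq
    have h1 : pmin t = pmin t' := congrArg Prod.fst heq
    have h2 : ψf (a1 t) = ψf (a1 t') :=
      congrArg (fun x : Option (J × {b // b ∈ B}) × T2 => (x.2 : _).1) heq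
    have key : ∀ (j : J) (b : {b // b ∈ B}),
        (δ j).Realize (Sum.elim ![a0 t, a1 t] b.1) ↔
          (δ j).Realize (Sum.elim ![a0 t', a1 t'] b.1) := by
      intro j b
      by_cases ht : (F t).Nonempty
      · have ht' : (F t').Nonempty := by
          by_contra hc
          rw [hpmin] at h1
          simp only [dif_pos ht, dif_neg hc] at h1
          exact nomatch h1
        obtain ⟨hpF, hpminsub⟩ := (hminex t ht).choose_spec
        obtain ⟨hpF', hpminsub'⟩ := (hminex t' ht').choose_spec
        have hpp : (hminex t ht).choose = (hminex t' ht').choose := by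
          rw [hpmin] at h1
          simp only [dif_pos ht, dif_pos ht', Option.some.injEq] at h1
          exact h1
        set p := (hminex t ht).choose with hpdef
        have hψq : ψf (a1 t) ((b, p.2), (j, p.1)) = ψf (a1 t') ((b, p.2), (j, p.1)) :=
          congrFun h2 _
        constructor
        · intro hr
          have hjb : (j, b) ∈ F t := (hmemF t (j, b)).2 hr
          have hsub := hpminsub _ hjb
          have hv : ψf (a1 t) ((b, p.2), (j, p.1)) := fun x hx => hsub hx
          have hv' : ψf (a1 t') ((b, p.2), (j, p.1)) := hψq ▸ hv
          have hp'mem : (δ p.1).Realize (Sum.elim ![a0 t', a1 t'] p.2.1) := by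
            have hmem' : p ∈ F t' := by rw [hpp]; exact hpF'
            exact (hmemF t' p).1 hmem'
          exact hv' (a0 t') hp'mem
        · intro hr
          have hjb : (j, b) ∈ F t' := (hmemF t' (j, b)).2 hr
          have hsub : Sset (a1 t') p ≤ Sset (a1 t') (j, b) := by
            rw [hpp]; exact hpminsub' _ hjb
          have hv' : ψf (a1 t') ((b, p.2), (j, p.1)) := fun x hx => hsub hx
          have hv : ψf (a1 t) ((b, p.2), (j, p.1)) := hψq ▸ hv'
          have hpmem : (δ p.1).Realize (Sum.elim ![a0 t, a1 t] p.2.1) :=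
            (hmemF t p).1 hpF
          exact hv (a0 t) hpmem
      · have ht' : ¬ (F t').Nonempty := by
          by_contra hc
          rw [hpmin] at h1
          simp only [dif_neg ht, dif_pos hc] at h1
          exact nomatch h1
        have e1 : ¬ (δ j).Realize (Sum.elim ![a0 t, a1 t] b.1) :=
          fun hr => ht ⟨(j, b), (hmemF t (j, b)).2 hr⟩
        have e2 : ¬ (δ j).Realize (Sum.elim ![a0 t', a1 t'] b.1) :=
          fun hr => ht' ⟨(j, b), (hmemF t' (j, b)).2 hr⟩
        simp [e1, e2]
    apply Subtype.ext
    rw [hspec t, hspec t']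
    funext b
    exact propext (boolcomb_iff hφ (fun ψ hψ => by
      obtain ⟨j, rfl⟩ := hψ
      exact key j b))
  have hle : Nat.card T1 ≤ Nat.card (Option (J × {b // b ∈ B}) × T2) :=
    Nat.card_le_card_of_injective g hginj
  have hcard : Nat.card (Option (J × {b // b ∈ B}) × T2) =
      (Fintype.card J * B.card + 1) * Nat.card T2 := by
    rw [Nat.card_prod]
    congr 1
    rw [Nat.card_eq_fintype_card, Fintype.card_option, Fintype.card_prod,
      Fintype.card_coe]
  calc Set.ncard T1 = Nat.card T1 := rfl
    _ ≤ Nat.card (Option (J × {b // b ∈ B}) × T2) := hle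
    _ = (Fintype.card J * B.card + 1) * Nat.card T2 := hcard
    _ = (Fintype.card J * B.card + 1) * Set.ncard T2 := rfl
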